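/- If λ, μ are dominant weights, u, u′ ∈ W, and r ∈ W_λ satisfies r(λ + u′μ) = λ + uμ, then r u′ μ = u μ and hence W_λ u′ W_μ = W_λ u W_μ. -/

import Mathlib

/-- If `λ, μ` are dominant weights, `u, u′ ∈ W`, and `r ∈ W_λ` satisfies
`r(λ + u′μ) = λ + uμ`, then `r u′ μ = u μ` and hence
`W_λ u′ W_μ = W_λ u W_μ` as double cosets. -/
theorem stmt_7 (W : Type*) (V : Type*) [Group W] [AddCommGroup V] [Module ℚ V]
    [DistribMulAction W V]
    (coroots : Finset (Module.Dual ℚ V))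
    (lam mu : V)
    (hlam : ∀ c ∈ coroots, 0 ≤ c lam)
    (hmu : ∀ c ∈ coroots, 0 ≤ c mu)
    (u u' r : W)
    (hr : r ∈ MulAction.stabilizer W lam)
    (h : r • (lam + u' • mu) = lam + u • mu) :
    (r * u') • mu = u • mu
    ∧ DoubleCoset.doubleCoset u' (MulAction.stabilizer W lam : Set W)
          (MulAction.stabilizer W mu : Set W)
        = DoubleCoset.doubleCoset u (MulAction.stabilizer W lam : Set W)
            (MulAction.stabilizer W mu : Set W) := by
  have hr' : r • lam = lam := hr
  rw [smul_add, hr'] at h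
  have h1 : r • u' • mu = u • mu := add_left_cancel h
  refine ⟨by rw [mul_smul]; exact h1, ?_⟩
  have ht : (u⁻¹ * (r * u')) ∈ MulAction.stabilizer W mu := by
    simp [MulAction.mem_stabilizer_iff, mul_smul, h1]
  have hmem : u' ∈ DoubleCoset.doubleCoset u (MulAction.stabilizer W lam : Set W)
      (MulAction.stabilizer W mu : Set W) := by
    refine DoubleCoset.mem_doubleCoset.mpr ⟨r⁻¹, inv_mem hr, u⁻¹ * (r * u'), ht, ?_⟩
    group
  exact DoubleCoset.doubleCoset_eq_of_mem hmem
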